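/- For all positive integers m, n and every BQAP1 instance (q, c, d): min over a : Fin n, b : Fin m of f1(σ^a, τ^b) ≤ A1(q,c,d) ≤ max over a : Fin n, b : Fin m of f1(σ^a, τ^b), where (σ^a, τ^b) is the constant feasible solution with σ^a(i) = a for all i and τ^b(l) = b for all l. -/

import Mathlib

/-- Objective function of BQAP1. -/
noncomputable def f1 {m n : ℕ} (q : Fin m → Fin n → Fin m → Fin n → ℝ)
    (c d : Fin m → Fin n → ℝ) (σ : Fin m → Fin n) (τ : Fin n → Fin m) : ℝ :=
  (∑ i, ∑ l, q i (σ i) (τ l) l) + (∑ i, c i (σ i)) + (∑ l, d (τ l) l)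

/-- Average objective value of BQAP1. -/
noncomputable def A1 {m n : ℕ} (q : Fin m → Fin n → Fin m → Fin n → ℝ)
    (c d : Fin m → Fin n → ℝ) : ℝ :=
  (1 / ((m : ℝ) * n)) * (∑ i, ∑ j, ∑ k, ∑ l, q i j k l)
    + (1 / (n : ℝ)) * (∑ i, ∑ j, c i j)
    + (1 / (m : ℝ)) * (∑ i, ∑ j, d i j)

theorem min_max_constant_solutions_BQAP1 (m n : ℕ) (hm : 0 < m) (hn : 0 < n)
    (q : Fin m → Fin n → Fin m → Fin n → ℝ) (c d : Fin m → Fin n → ℝ) :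
    Finset.univ.inf' ⟨((⟨0, hn⟩ : Fin n), (⟨0, hm⟩ : Fin m)), Finset.mem_univ _⟩
        (fun ab : Fin n × Fin m => f1 q c d (fun _ => ab.1) (fun _ => ab.2))
      ≤ A1 q c d ∧
    A1 q c d ≤
      Finset.univ.sup' ⟨((⟨0, hn⟩ : Fin n), (⟨0, hm⟩ : Fin m)), Finset.mem_univ _⟩
        (fun ab : Fin n × Fin m => f1 q c d (fun _ => ab.1) (fun _ => ab.2)) := by
  set g : Fin n × Fin m → ℝ :=
    fun ab => f1 q c d (fun _ => ab.1) (fun _ => ab.2) with hg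
  have hne : (Finset.univ : Finset (Fin n × Fin m)).Nonempty :=
    ⟨((⟨0, hn⟩ : Fin n), (⟨0, hm⟩ : Fin m)), Finset.mem_univ _⟩
  have hm' : (m : ℝ) ≠ 0 := Nat.cast_ne_zero.mpr hm.ne'
  have hn' : (n : ℝ) ≠ 0 := Nat.cast_ne_zero.mpr hn.ne'
  have hcard : ((Finset.univ : Finset (Fin n × Fin m)).card : ℝ) = (n : ℝ) * m := by
    simp [Finset.card_univ]
  have hsum : ∑ ab : Fin n × Fin m, g ab = (n : ℝ) * m * A1 q c d := by
    have h1 : ∑ ab : Fin n × Fin m, g ab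
        = (∑ a : Fin n, ∑ b : Fin m, ∑ i, ∑ l, q i a b l)
          + (m : ℝ) * (∑ a : Fin n, ∑ i, c i a)
          + (n : ℝ) * (∑ b : Fin m, ∑ l, d b l) := by
      rw [Fintype.sum_prod_type]
      simp only [hg, f1, Finset.sum_add_distrib, Finset.sum_const, Finset.card_univ,
        Fintype.card_fin, nsmul_eq_mul]
      rw [← Finset.mul_sum]
    rw [h1, A1]
    have hq : ∑ a : Fin n, ∑ b : Fin m, ∑ i, ∑ l, q i a b l
        = ∑ i, ∑ j, ∑ k, ∑ l, q i j k l := by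
      rw [show (∑ a : Fin n, ∑ b : Fin m, ∑ i, ∑ l, q i a b l)
          = ∑ a : Fin n, ∑ i : Fin m, ∑ b : Fin m, ∑ l, q i a b l from
        Finset.sum_congr rfl (fun a _ => Finset.sum_comm), Finset.sum_comm]
    have hc : ∑ a : Fin n, ∑ i, c i a = ∑ i, ∑ j, c i j := by rw [Finset.sum_comm]
    rw [hq, hc]
    field_simp
  constructor
  · have hle : (Finset.univ : Finset (Fin n × Fin m)).card •
        Finset.univ.inf' hne g ≤ ∑ ab : Fin n × Fin m, g ab :=
      Finset.card_nsmul_le_sum _ _ _ (fun ab _ => Finset.inf'_le g (Finset.mem_univ ab))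
    rw [nsmul_eq_mul, hcard, hsum] at hle
    have hpos : (0 : ℝ) < (n : ℝ) * m := by positivity
    exact le_of_mul_le_mul_left hle hpos
  · have hle : ∑ ab : Fin n × Fin m, g ab ≤
        (Finset.univ : Finset (Fin n × Fin m)).card • Finset.univ.sup' hne g :=
      Finset.sum_le_card_nsmul _ _ _ (fun ab _ => Finset.le_sup' g (Finset.mem_univ ab))
    rw [nsmul_eq_mul, hcard, hsum] at hle
    have hpos : (0 : ℝ) < (n : ℝ) * m := by positivity
    exact le_of_mul_le_mul_left hle hpos
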